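/- Let Γ(R,S) be a U-unitary Cayley graph over a nontrivial finite commutative ring R, and suppose the Cayley graph Γ(R,U) (with generating set the subgroup U itself) is connected. Then Γ(R,S) is connected if and only if the ideal of R generated by S is all of R (equivalently, R = Σ_i I_i, the sum taken over those U-orbits K_i meeting S, where I_i is the ideal generated by any element of K_i). -/

import Mathlib

open Pointwise

/-- The Cayley graph of a subset `S` of an additive group: distinct `x, y` are adjacent
iff `x - y ∈ S` (for a symmetric `S` this coincides with the usual definition). -/
def cayleyGraph {G : Type*} [AddCommGroup G] (S : Set G) : SimpleGraph G :=
  SimpleGraph.fromRel (fun x y => x - y ∈ S)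

lemma cayley_adj {G : Type*} [AddCommGroup G] (S : Set G) {x y : G} :
    (cayleyGraph S).Adj x y ↔ x ≠ y ∧ (x - y ∈ S ∨ y - x ∈ S) := by
  simp [cayleyGraph, SimpleGraph.fromRel_adj]

lemma reach_add {G : Type*} [AddCommGroup G] (S : Set G) (c : G) {x y : G}
    (h : (cayleyGraph S).Reachable x y) :
    (cayleyGraph S).Reachable (x + c) (y + c) := by
  let hom : cayleyGraph S →g cayleyGraph S :=
    ⟨fun z => z + c, fun {a b} hab => by
      rw [cayley_adj] at hab ⊢
      exact ⟨by simpa using hab.1, by simpa using hab.2⟩⟩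
  exact h.map hom

lemma sub_mem_closure_of_reach {G : Type*} [AddCommGroup G] (S : Set G) {x y : G}
    (h : (cayleyGraph S).Reachable x y) : x - y ∈ AddSubgroup.closure S := by
  obtain ⟨w⟩ := h
  induction w with
  | nil => simpa using (AddSubgroup.closure S).zero_mem
  | @cons a b c hadj p ih =>
      have hab : a - b ∈ AddSubgroup.closure S := by
        rw [cayley_adj] at hadj
        rcases hadj.2 with h' | h'
        · exact AddSubgroup.subset_closure h'
        · have := AddSubgroup.neg_mem _ (AddSubgroup.subset_closure h')
          simpa using this
      have : a - c = (a - b) + (b - c) := (sub_add_sub_cancel a b c).symm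
      rw [this]
      exact (AddSubgroup.closure S).add_mem hab ih

lemma reach_of_mem_closure {G : Type*} [AddCommGroup G] (S : Set G) {x : G}
    (h : x ∈ AddSubgroup.closure S) : (cayleyGraph S).Reachable 0 x := by
  induction h using AddSubgroup.closure_induction with
  | mem s hs =>
      by_cases h0 : s = 0
      · subst h0; exact SimpleGraph.Reachable.refl 0
      · refine SimpleGraph.Adj.reachable ?_
        rw [cayley_adj]
        exact ⟨Ne.symm h0, Or.inr (by simpa using hs)⟩
  | zero => exact SimpleGraph.Reachable.refl 0
  | add a b _ _ ha hb =>
      have h2 : (cayleyGraph S).Reachable a (b + a) := by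
        simpa using reach_add S a hb
      simpa [add_comm] using ha.trans h2
  | neg a _ ha =>
      have h2 : (cayleyGraph S).Reachable (-a) 0 := by
        simpa using reach_add S (-a) ha
      exact h2.symm

lemma cayley_connected_iff {G : Type*} [AddCommGroup G] [Nonempty G] (S : Set G) :
    (cayleyGraph S).Connected ↔ AddSubgroup.closure S = ⊤ := by
  constructor
  · intro h
    rw [eq_top_iff]
    intro x _
    have := sub_mem_closure_of_reach S (h.preconnected x 0)
    simpa using this
  · intro h
    refine ⟨fun x y => ?_⟩
    have hy : y - x ∈ AddSubgroup.closure S := by rw [h]; trivial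
    have := reach_add S x (reach_of_mem_closure S hy)
    simpa using this

/-- Let `Γ(R,S)` be a `U`-unitary Cayley graph over a nontrivial finite
commutative ring `R`, and suppose the Cayley graph `Γ(R,U)` is connected. Then `Γ(R,S)`
is connected iff the ideal of `R` generated by `S` is all of `R`. -/
theorem stmt5 {R : Type*} [CommRing R] [Fintype R] [Nontrivial R]
    (U : Subgroup Rˣ) (hU : (-1 : Rˣ) ∈ U)
    (S : Set R) (hSsymm : ∀ s ∈ S, -s ∈ S) (hS0 : (0 : R) ∉ S)
    (hstable : ∀ u ∈ U, (u : R) • S = S)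
    (hconnU : (cayleyGraph ((fun u : Rˣ => (u : R)) '' (U : Set Rˣ))).Connected) :
    (cayleyGraph S).Connected ↔ Ideal.span S = ⊤ := by
  rw [cayley_connected_iff]
  constructor
  · intro h
    rw [eq_top_iff]
    intro x _
    have hx : x ∈ AddSubgroup.closure S := by rw [h]; trivial
    have hle : AddSubgroup.closure S ≤ (Ideal.span S).toAddSubgroup :=
      AddSubgroup.closure_le _ |>.mpr (fun s hs => Ideal.subset_span hs)
    exact hle hx
  · intro h
    -- the additive closure of S is an ideal
    have key : ∀ r : R, ∀ x ∈ AddSubgroup.closure S, r * x ∈ AddSubgroup.closure S := by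
      intro r x hx
      induction hx using AddSubgroup.closure_induction with
      | mem s hs =>
          -- r is a ±-sum of elements of U
          have hr : r ∈ AddSubgroup.closure ((fun u : Rˣ => (u : R)) '' (U : Set Rˣ)) := by
            rw [(cayley_connected_iff _).mp hconnU]; trivial
          induction hr using AddSubgroup.closure_induction with
          | mem u hu =>
              obtain ⟨v, hv, rfl⟩ := hu
              have : (v : R) * s ∈ S := by
                rw [← hstable v hv]
                exact ⟨s, hs, rfl⟩
              exact AddSubgroup.subset_closure this
          | zero => simpa using (AddSubgroup.closure S).zero_mem
          | add a b _ _ ha hb => rw [add_mul]; exact (AddSubgroup.closure S).add_mem ha hb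
          | neg a _ ha => rw [neg_mul]; exact (AddSubgroup.closure S).neg_mem ha
      | zero => simpa using (AddSubgroup.closure S).zero_mem
      | add a b _ _ ha hb => rw [mul_add]; exact (AddSubgroup.closure S).add_mem ha hb
      | neg a _ ha => rw [mul_neg]; exact (AddSubgroup.closure S).neg_mem ha
    let I : Ideal R :=
      { carrier := AddSubgroup.closure S
        zero_mem' := (AddSubgroup.closure S).zero_mem
        add_mem' := fun ha hb => (AddSubgroup.closure S).add_mem ha hb
        smul_mem' := fun r x hx => key r x hx }
    have hle : Ideal.span S ≤ I := Ideal.span_le.mpr AddSubgroup.subset_closure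
    rw [eq_top_iff]
    intro x _
    have : x ∈ I := hle (h ▸ trivial)
    exact this
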